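/- Let X be a random variable with values in ℝ^m whose support is bounded (there is M with ‖X‖ ≤ M almost surely), and let r₁, r₂ ∈ ℝ^m with r₁ ≠ r₂. Then there exists a measurable set S ⊆ ℝ^m with P[r₁ + X ∈ S] > 0 and P[r₂ + X ∈ S] = 0. Consequently there is no ε for which P[r₁ + X ∈ S] ≤ e^{ε}·P[r₂ + X ∈ S] holds for all measurable S; i.e. an additive-noise mechanism using noise of bounded support cannot be ε-differentially private for any ε once it must distinguish two distinct true answers. -/

import Mathlib

open MeasureTheory Real

/-- If the noise `X` has bounded support (`‖X‖ ≤ M` almost surely) and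
`r₁ ≠ r₂`, then there is a measurable set `S` with `P[r₁ + X ∈ S] > 0` and
`P[r₂ + X ∈ S] = 0`; consequently no `ε` makes the additive-noise mechanism
`ε`-differentially private for the pair `r₁, r₂`. -/
theorem bounded_support_noise_not_dp
    {m : ℕ} {Ω : Type*} [MeasurableSpace Ω] (P : Measure Ω) [IsProbabilityMeasure P]
    (X : Ω → EuclideanSpace ℝ (Fin m)) (hX : Measurable X)
    (M : ℝ) (hM : ∀ᵐ ω ∂P, ‖X ω‖ ≤ M)
    (r₁ r₂ : EuclideanSpace ℝ (Fin m)) (hne : r₁ ≠ r₂) :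
    (∃ S : Set (EuclideanSpace ℝ (Fin m)), MeasurableSet S ∧
      0 < P {ω | r₁ + X ω ∈ S} ∧ P {ω | r₂ + X ω ∈ S} = 0) ∧
    ∀ ε : ℝ, ¬ (∀ S : Set (EuclideanSpace ℝ (Fin m)), MeasurableSet S →
      P {ω | r₁ + X ω ∈ S} ≤ ENNReal.ofReal (Real.exp ε) * P {ω | r₂ + X ω ∈ S}) := by
  set v : EuclideanSpace ℝ (Fin m) := r₁ - r₂ with hv
  have hvne : v ≠ 0 := sub_ne_zero.mpr hne
  have hvpos : (0:ℝ) < ‖v‖^2 := by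
    have := norm_pos_iff.mpr hvne
    positivity
  set f : Ω → ℝ := fun ω => inner ℝ v (X ω) with hf
  have hfb : ∀ᵐ ω ∂P, f ω ≤ ‖v‖ * M := by
    filter_upwards [hM] with ω h
    calc f ω ≤ ‖v‖ * ‖X ω‖ := real_inner_le_norm v (X ω)
      _ ≤ ‖v‖ * M := by nlinarith [norm_nonneg v]
  have hflb : ∀ᵐ ω ∂P, -(‖v‖ * M) ≤ f ω := by
    filter_upwards [hM] with ω h
    have := abs_real_inner_le_norm v (X ω)
    have : |f ω| ≤ ‖v‖ * M := by
      refine le_trans this ?_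
      nlinarith [norm_nonneg v]
    linarith [neg_abs_le (f ω)]
  have hbdd : Filter.IsBoundedUnder (· ≤ ·) (ae P) f :=
    ⟨‖v‖ * M, hfb⟩
  have hcobdd : Filter.IsCoboundedUnder (· ≤ ·) (ae P) f :=
    Filter.IsBoundedUnder.isCoboundedUnder_le ⟨-(‖v‖ * M), by
      filter_upwards [hflb] with ω h using h⟩
  set c : ℝ := essSup f P with hc
  have hle : ∀ᵐ ω ∂P, f ω ≤ c := ae_le_essSup hbdd
  -- the chosen set
  set S : Set (EuclideanSpace ℝ (Fin m)) :=
    {x | (inner ℝ v r₂ : ℝ) + c < inner ℝ v x} with hS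
  have hinner_cont : Continuous fun x : EuclideanSpace ℝ (Fin m) => (inner ℝ v x : ℝ) :=
    continuous_const.inner continuous_id
  have hSmeas : MeasurableSet S := measurableSet_lt measurable_const hinner_cont.measurable
  have hset2 : {ω | r₂ + X ω ∈ S} = {ω | c < f ω} := by
    ext ω
    simp only [hS, Set.mem_setOf_eq, inner_add_right]
    constructor <;> intro h <;> linarith
  have hset1 : {ω | r₁ + X ω ∈ S} = {ω | c - ‖v‖^2 < f ω} := by
    ext ω
    have hinner : (inner ℝ v r₁ : ℝ) = inner ℝ v r₂ + ‖v‖^2 := by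
      have : (inner ℝ v v : ℝ) = ‖v‖^2 := real_inner_self_eq_norm_sq v
      have h2 : (inner ℝ v r₁ : ℝ) - inner ℝ v r₂ = inner ℝ v v := by
        rw [← inner_sub_right]
      linarith
    simp only [hS, Set.mem_setOf_eq, inner_add_right, hinner]
    exact ⟨fun h => by linarith, fun h => by linarith⟩
  have h2zero : P {ω | r₂ + X ω ∈ S} = 0 := by
    rw [hset2, show {ω | c < f ω} = {ω | ¬ f ω ≤ c} from by ext ω; simp [not_le]]
    exact ae_iff.mp hle
  have h1pos : 0 < P {ω | r₁ + X ω ∈ S} := by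
    rw [hset1]
    by_contra h
    push_neg at h
    have hz : P {ω | c - ‖v‖^2 < f ω} = 0 := le_antisymm h bot_le
    have hae : ∀ᵐ ω ∂P, f ω ≤ c - ‖v‖^2 := by
      apply ae_iff.mpr
      rw [show {a | ¬ f a ≤ c - ‖v‖^2} = {ω | c - ‖v‖^2 < f ω} from by ext ω; simp [not_le]]
      exact hz
    have : c ≤ c - ‖v‖^2 := Filter.limsup_le_of_le hcobdd hae
    linarith
  refine ⟨⟨S, hSmeas, h1pos, h2zero⟩, ?_⟩
  intro ε hcon
  have := hcon S hSmeas
  rw [h2zero, mul_zero] at this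
  exact absurd (le_antisymm this bot_le) (ne_of_gt h1pos)
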